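/- Let p be an odd prime and G a finite p-group. Let N = Ω₁(G) be the subgroup of G generated by the elements of G of order dividing p (i.e. by {g ∈ G | gᵖ = 1}). If Aut(N) is a p-group, then Aut(G) is a p-group. (Corollary 2.4.) -/

import Mathlib

open scoped commutatorElement

section CentralAux

variable {G : Type*} [Group G]

lemma pow_swap_central {c : G} (hc : ∀ z : G, c * z = z * c) (k : ℕ) (z : G) :
    z * c ^ k = c ^ k * z :=
  ((Commute.pow_left (hc z) k).eq).symm

lemma semicomm_pow_mul {c x y : G} (hc : ∀ z : G, c * z = z * c)
    (hyx : y * x = c * (x * y)) (n : ℕ) : y ^ n * x = c ^ n * (x * y ^ n) := by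
  induction n with
  | zero => simp
  | succ n ih =>
    calc y ^ (n+1) * x = y * (y ^ n * x) := by rw [pow_succ']; group
    _ = y * (c ^ n * (x * y ^ n)) := by rw [ih]
    _ = c ^ n * (y * (x * y ^ n)) := by
        rw [← mul_assoc, pow_swap_central hc, mul_assoc]
    _ = c ^ n * ((y * x) * y ^ n) := by rw [mul_assoc]
    _ = c ^ n * ((c * (x * y)) * y ^ n) := by rw [hyx]
    _ = c ^ (n+1) * (x * y ^ (n+1)) := by rw [pow_succ, pow_succ']; group

lemma semicomm_mul_pow {c x y : G} (hc : ∀ z : G, c * z = z * c)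
    (hyx : y * x = c * (x * y)) (n : ℕ) :
    (x * y) ^ n = c ^ (n.choose 2) * (x ^ n * y ^ n) := by
  induction n with
  | zero => simp
  | succ n ih =>
    have hchoose : (n + 1).choose 2 = n.choose 2 + n := by
      rw [Nat.choose_succ_succ, Nat.choose_one_right, Nat.add_comm]
    calc (x * y) ^ (n+1) = (x * y) ^ n * (x * y) := by rw [pow_succ]
    _ = c ^ (n.choose 2) * (x ^ n * y ^ n) * (x * y) := by rw [ih]
    _ = c ^ (n.choose 2) * (x ^ n * (y ^ n * x) * y) := by group
    _ = c ^ (n.choose 2) * (x ^ n * (c ^ n * (x * y ^ n)) * y) := by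
        rw [semicomm_pow_mul hc hyx]
    _ = c ^ (n.choose 2) * (c ^ n * (x ^ n * (x * y ^ n) * y)) := by
        rw [← mul_assoc (x ^ n), pow_swap_central hc]; group
    _ = c ^ ((n+1).choose 2) * (x ^ (n+1) * y ^ (n+1)) := by
        rw [hchoose, pow_add, pow_succ, pow_succ]; group

/-- If `⁅x,y⁆` is central then `⁅x^n, y⁆ = ⁅x,y⁆^n`. -/
lemma semicomm_commutator_pow {x y : G} (hc : ∀ z : G, ⁅x, y⁆ * z = z * ⁅x, y⁆) (n : ℕ) :
    ⁅x ^ n, y⁆ = ⁅x, y⁆ ^ n := by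
  have hyx : x * y = ⁅x, y⁆ * (y * x) := by rw [commutatorElement_def]; group
  have h := semicomm_pow_mul hc hyx n
  rw [commutatorElement_def]
  calc x ^ n * y * (x ^ n)⁻¹ * y⁻¹
      = (x ^ n * y) * ((x ^ n)⁻¹ * y⁻¹) := by group
  _ = (⁅x, y⁆ ^ n * (y * x ^ n)) * ((x ^ n)⁻¹ * y⁻¹) := by rw [h]
  _ = ⁅x, y⁆ ^ n := by group

end CentralAux

section RestrictAux

variable {G : Type*} [Group G]

/-- Restriction of an automorphism to an invariant subgroup. -/
def autRestrict (α : MulAut G) (H : Subgroup G) (h : ∀ x ∈ H, α x ∈ H)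
    (h' : ∀ x ∈ H, α.symm x ∈ H) : MulAut ↥H where
  toFun x := ⟨α x, h x x.2⟩
  invFun x := ⟨α.symm x, h' x x.2⟩
  left_inv x := by ext; simp
  right_inv x := by ext; simp
  map_mul' x y := by ext; simp

@[simp] lemma autRestrict_coe (α : MulAut G) (H : Subgroup G) (h h') (x : ↥H) :
    ((autRestrict α H h h' x : ↥H) : G) = α (x : G) := rfl

lemma autRestrict_pow_coe (α : MulAut G) (H : Subgroup G) (h h') (k : ℕ) (x : ↥H) :
    (((autRestrict α H h h' ^ k) x : ↥H) : G) = (α ^ k) (x : G) := by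
  induction k with
  | zero => simp
  | succ n ih =>
    rw [pow_succ', pow_succ', MulAut.mul_apply, MulAut.mul_apply, autRestrict_coe, ih]

lemma orderOf_autRestrict_dvd (α : MulAut G) (H : Subgroup G) (h h') :
    orderOf (autRestrict α H h h') ∣ orderOf α := by
  apply orderOf_dvd_of_pow_eq_one
  ext x
  rw [autRestrict_pow_coe, pow_orderOf_eq_one]
  rfl

lemma exists_order_p {Q : Type*} [Group Q] (p : ℕ) :
    ∀ (k : ℕ) (q : Q), q ≠ 1 → q ^ p ^ k = 1 → ∃ y : Q, y ≠ 1 ∧ y ^ p = 1 := by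
  intro k
  induction k with
  | zero =>
    intro q hq h
    rw [pow_zero, pow_one] at h
    exact absurd h hq
  | succ k ih =>
    intro q hq h
    by_cases h' : q ^ p ^ k = 1
    · exact ih q hq h'
    · exact ⟨q ^ p ^ k, h', by rw [← pow_mul, ← pow_succ]; exact h⟩

/-- Key cancellation: if `g⁻¹ * α g` is a fixed point of `α` for every `g`, and the order of
`α` is coprime to `p` while `G` is a `p`-group, then `α = 1`. -/
lemma claimZ {p : ℕ} {G : Type*} [Group G] (hG : IsPGroup p G)
    (α : MulAut G) (hα : (orderOf α).Coprime p)
    (hs : ∀ g : G, α (g⁻¹ * α g) = g⁻¹ * α g) : α = 1 := by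
  suffices h : ∀ g : G, α g = g by
    ext g; rw [h g]; rfl
  intro g
  have hpow : ∀ m : ℕ, (α ^ m) g = g * (g⁻¹ * α g) ^ m := by
    intro m
    induction m with
    | zero => simp
    | succ m ih =>
      rw [pow_succ', MulAut.mul_apply, ih, map_mul, map_pow, hs g, pow_succ',
        ← mul_assoc, mul_inv_cancel_left]
  have hsn : (g⁻¹ * α g) ^ orderOf α = 1 := by
    have h1 := hpow (orderOf α)
    rw [pow_orderOf_eq_one] at h1
    have h1' : g = g * (g⁻¹ * α g) ^ orderOf α := h1
    rwa [left_eq_mul] at h1'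
  obtain ⟨k, hk⟩ := hG (g⁻¹ * α g)
  have hd1 : orderOf (g⁻¹ * α g) ∣ orderOf α := orderOf_dvd_of_pow_eq_one hsn
  have hd2 : orderOf (g⁻¹ * α g) ∣ p ^ k := orderOf_dvd_of_pow_eq_one hk
  have hc : (orderOf (g⁻¹ * α g)).Coprime (p ^ k) :=
    (Nat.Coprime.coprime_dvd_left hd1 hα).pow_right k
  have h1 : orderOf (g⁻¹ * α g) = 1 := hc.eq_one_of_dvd hd2
  have : g⁻¹ * α g = 1 := orderOf_eq_one_iff.mp h1
  exact (inv_mul_eq_one.mp this).symm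

end RestrictAux

theorem mainAux (p : ℕ) [hp : Fact p.Prime] (hodd : Odd p) :
    ∀ (n : ℕ) {G : Type u} [Group G] [Finite G], Nat.card G ≤ n → IsPGroup p G →
      ∀ α : MulAut G, (orderOf α).Coprime p → (∀ g : G, g ^ p = 1 → α g = g) → α = 1 := by
  intro n
  induction n with
  | zero =>
    intro G _ _ hcard
    have := Nat.card_pos (α := G)
    omega
  | succ n IH =>
    intro G _ _ hcard hG α hα hfix
    rcases subsingleton_or_nontrivial G with hs | hs
    · ext g; exact Subsingleton.elim _ _
    set S : Set G := {g : G | (∃ x : G, x ^ p = g) ∨ ∃ a b : G, ⁅a, b⁆ = g} with hS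
    set K : Subgroup G := Subgroup.closure S with hK
    have hSinv : ∀ β : MulAut G, ∀ x ∈ K, β x ∈ K := by
      intro β
      have hle : K ≤ K.comap (β : G →* G) := by
        rw [hK, Subgroup.closure_le]
        rintro g (⟨x, rfl⟩ | ⟨a, b, rfl⟩)
        · refine Subgroup.mem_comap.mpr ?_
          have hb : (β : G →* G) (x ^ p) = (β x) ^ p := map_pow _ _ _
          rw [hb]
          exact Subgroup.subset_closure (Or.inl ⟨β x, rfl⟩)
        · refine Subgroup.mem_comap.mpr ?_
          rw [map_commutatorElement]
          exact Subgroup.subset_closure (Or.inr ⟨β a, β b, rfl⟩)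
      exact fun x hx => hle hx
    -- `K` is a proper subgroup
    have hKne : K ≠ ⊤ := by
      intro htop
      have hcomm : commutator G ≠ ⊤ := by
        intro hct
        obtain ⟨m, hm⟩ := Subgroup.nilpotent_iff_lowerCentralSeries.mp hG.isNilpotent
        have hall : ∀ m : ℕ, (⊤ : Subgroup G).lowerCentralSeries m = ⊤ := by
          intro m
          induction m with
          | zero => exact Subgroup.lowerCentralSeries_zero _
          | succ m ihm =>
            rw [Subgroup.lowerCentralSeries_succ, ihm]
            exact hct
        obtain ⟨a, b, hab⟩ := hs
        apply hab
        have ha : a ∈ (⊥ : Subgroup G) := by rw [← hm, hall]; trivial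
        have hb : b ∈ (⊥ : Subgroup G) := by rw [← hm, hall]; trivial
        rw [Subgroup.mem_bot] at ha hb
        rw [ha, hb]
      obtain ⟨g0, hg0⟩ : ∃ g0 : G, g0 ∉ commutator G := by
        by_contra h
        push_neg at h
        exact hcomm ((Subgroup.eq_top_iff' (commutator G)).mpr h)
      set Q := Abelianization G with hQdef
      have : Finite Q := Quotient.finite _
      set π : G →* Q := Abelianization.of with hπ
      have hπsurj : Function.Surjective π := fun q => QuotientGroup.mk_surjective q
      have hQ1 : π g0 ≠ 1 := by
        intro h
        exact hg0 ((QuotientGroup.eq_one_iff g0).mp h)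
      have hrange : (powMonoidHom p : Q →* Q).range = ⊤ := by
        rw [eq_top_iff]
        intro q _
        obtain ⟨x, rfl⟩ := hπsurj q
        have hx : x ∈ K := htop ▸ Subgroup.mem_top x
        have hle : K ≤ ((powMonoidHom p : Q →* Q).range).comap π := by
          rw [hK, Subgroup.closure_le]
          rintro g (⟨x, rfl⟩ | ⟨a, b, rfl⟩)
          · refine Subgroup.mem_comap.mpr ?_
            exact ⟨π x, by rw [powMonoidHom_apply, map_pow]⟩
          · refine Subgroup.mem_comap.mpr ?_
            have : π ⁅a, b⁆ = 1 := by
              rw [map_commutatorElement]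
              exact commutatorElement_eq_one_iff_commute.mpr (mul_comm _ _)
            rw [this]
            exact one_mem _
        exact hle hx
      have hsurj : Function.Surjective (powMonoidHom p : Q →* Q) :=
        MonoidHom.range_eq_top.mp hrange
      have hinj : Function.Injective (powMonoidHom p : Q →* Q) :=
        Finite.injective_iff_surjective.mpr hsurj
      obtain ⟨k, hk⟩ := hG g0
      have hk' : (π g0) ^ p ^ k = 1 := by rw [← map_pow, hk, map_one]
      obtain ⟨y, hy1, hyp⟩ := exists_order_p p k (π g0) hQ1 hk'
      apply hy1
      apply hinj
      rw [powMonoidHom_apply, hyp, powMonoidHom_apply, one_pow]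
    -- restriction to proper invariant subgroups is trivial
    have key : ∀ (H : Subgroup G), H ≠ ⊤ → (∀ x ∈ H, α x ∈ H) → (∀ x ∈ H, α⁻¹ x ∈ H) →
        ∀ x ∈ H, α x = x := by
      intro H hne h1 h2 x hx
      have hcardH : Nat.card ↥H ≤ n := by
        have hd : Nat.card ↥H ∣ Nat.card G := Subgroup.card_subgroup_dvd_card H
        have hpos : 0 < Nat.card G := Nat.card_pos
        have hle : Nat.card ↥H ≤ Nat.card G := Nat.le_of_dvd hpos hd
        have hne' : Nat.card ↥H ≠ Nat.card G := fun h => hne (Subgroup.eq_top_of_card_eq H h)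
        omega
      have h2' : ∀ x ∈ H, α.symm x ∈ H := by
        intro x hx
        rw [← MulAut.inv_def]
        exact h2 x hx
      have hres := IH hcardH (hG.to_subgroup H) (autRestrict α H h1 h2')
        (Nat.Coprime.coprime_dvd_left (orderOf_autRestrict_dvd α H h1 h2') hα)
        (by
          intro h hh
          apply Subtype.ext
          have hcg : ((h : G)) ^ p = 1 := by
            have := congrArg (Subtype.val) hh
            simpa using this
          simpa using hfix _ hcg)
      have := congrArg (fun e : MulAut ↥H => ((e ⟨x, hx⟩ : ↥H) : G)) hres
      simpa using this
    have hKfix : ∀ x ∈ K, α x = x := key K hKne (hSinv α) (hSinv α⁻¹)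
    have hcfix : ∀ a b : G, α ⁅a, b⁆ = ⁅a, b⁆ := fun a b =>
      hKfix _ (Subgroup.subset_closure (Or.inr ⟨a, b, rfl⟩))
    have hpfix : ∀ x : G, α (x ^ p) = x ^ p := fun x =>
      hKfix _ (Subgroup.subset_closure (Or.inl ⟨x, rfl⟩))
    set D : Subgroup G := Subgroup.centralizer {x : G | α x = x} with hD
    have hsD : ∀ g : G, g⁻¹ * α g ∈ D := by
      intro g
      rw [hD, Subgroup.mem_centralizer_iff]
      intro c hc
      have hc' : α c = c := hc
      have h1 : ⁅α g, c⁆ = ⁅g, c⁆ := by rw [← hcfix g c, map_commutatorElement, hc']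
      have h2 : α g * c * (α g)⁻¹ = g * c * g⁻¹ := by
        rw [commutatorElement_def, commutatorElement_def] at h1
        exact mul_right_cancel h1
      calc c * (g⁻¹ * α g) = g⁻¹ * (g * c * g⁻¹) * α g := by group
      _ = g⁻¹ * (α g * c * (α g)⁻¹) * α g := by rw [h2]
      _ = (g⁻¹ * α g) * c := by group
    by_cases hDtop : D = ⊤
    · -- all fixed points are central
      apply claimZ hG α hα
      intro g
      apply hfix
      have hcfixc : α ⁅α g, g⁻¹⁆ = ⁅α g, g⁻¹⁆ := hcfix _ _
      have hcz : ∀ z : G, ⁅α g, g⁻¹⁆ * z = z * ⁅α g, g⁻¹⁆ := by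
        intro z
        have hz : z ∈ D := hDtop ▸ Subgroup.mem_top z
        rw [hD] at hz
        exact Subgroup.mem_centralizer_iff.mp hz _ hcfixc
      have hyx : α g * g⁻¹ = ⁅α g, g⁻¹⁆ * (g⁻¹ * α g) := by
        rw [commutatorElement_def]; group
      have hB := semicomm_mul_pow hcz hyx p
      have hap : (α g) ^ p = g ^ p := by rw [← map_pow, hpfix]
      have hcp : ⁅α g, g⁻¹⁆ ^ p = 1 := by
        have hcc := semicomm_commutator_pow hcz p
        rw [← hcc, hap]
        exact commutatorElement_eq_one_iff_commute.mpr
          (((Commute.refl g).pow_left p).inv_right)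
      obtain ⟨k2, hk2⟩ := hodd
      have hchoose : p.choose 2 = p * k2 := by
        rw [Nat.choose_two_right]
        have hp1 : p - 1 = 2 * k2 := by omega
        rw [hp1, show p * (2 * k2) = 2 * (p * k2) by ring, Nat.mul_div_cancel_left _ two_pos]
      rw [hB, hap, inv_pow, inv_mul_cancel, mul_one, hchoose, pow_mul, hcp, one_pow]
    · have hDinv1 : ∀ x ∈ D, α x ∈ D := by
        intro x hx
        rw [hD, Subgroup.mem_centralizer_iff]
        intro c hc
        have hc' : α c = c := hc
        have hx' : c * x = x * c := by
          rw [hD] at hx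
          exact Subgroup.mem_centralizer_iff.mp hx _ hc
        calc c * α x = α (c * x) := by rw [map_mul, hc']
        _ = α (x * c) := by rw [hx']
        _ = α x * c := by rw [map_mul, hc']
      have hDinv2 : ∀ x ∈ D, α⁻¹ x ∈ D := by
        intro x hx
        rw [hD, Subgroup.mem_centralizer_iff]
        intro c hc
        have hc' : α c = c := hc
        have hcs : α⁻¹ c = c := by
          rw [MulAut.inv_def]
          conv_lhs => rw [← hc']
          exact α.symm_apply_apply c
        have hx' : c * x = x * c := by
          rw [hD] at hx
          exact Subgroup.mem_centralizer_iff.mp hx _ hc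
        calc c * α⁻¹ x = α⁻¹ (c * x) := by rw [map_mul, hcs]
        _ = α⁻¹ (x * c) := by rw [hx']
        _ = α⁻¹ x * c := by rw [map_mul, hcs]
      have hDfix : ∀ x ∈ D, α x = x := key D hDtop hDinv1 hDinv2
      apply claimZ hG α hα
      intro g
      exact hDfix _ (hsD g)

/-- **Corollary 2.4.** Let `p` be an odd prime and `G` a finite `p`-group.  Let
`N = Ω₁(G)` be the subgroup of `G` generated by the elements of order dividing `p`.
If `Aut(N)` is a `p`-group, then `Aut(G)` is a `p`-group. -/
theorem aut_is_pGroup_of_aut_omega1_is_pGroup (p : ℕ) [Fact p.Prime] (hodd : Odd p)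
    {G : Type*} [Group G] [Finite G] (hG : IsPGroup p G)
    (hN : IsPGroup p (MulAut ↥(Subgroup.closure {g : G | g ^ p = 1}))) :
    IsPGroup p (MulAut G) := by
  haveI hfin : Finite (MulAut G) :=
    Finite.of_injective (fun β : MulAut G => (β : G → G)) DFunLike.coe_injective
  intro β
  set n := orderOf β with hn
  set k := n.factorization p with hk
  refine ⟨k, ?_⟩
  set γ := β ^ p ^ k with hγ
  have hn0 : n ≠ 0 := (orderOf_pos β).ne'
  have hdvd : p ^ k ∣ n := Nat.ordProj_dvd n p
  have horder : orderOf γ = n / p ^ k := by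
    rw [hγ, orderOf_pow, ← hn, Nat.gcd_eq_right hdvd]
  have hcop : (orderOf γ).Coprime p := by
    rw [horder]
    exact (Nat.coprime_ordCompl (Fact.out : p.Prime) hn0).symm
  set Nsub := Subgroup.closure {g : G | g ^ p = 1} with hNsub
  have hNinv : ∀ β' : MulAut G, ∀ x ∈ Nsub, β' x ∈ Nsub := by
    intro β'
    have hle : Nsub ≤ Nsub.comap (β' : G →* G) := by
      rw [hNsub, Subgroup.closure_le]
      intro g hg
      refine Subgroup.mem_comap.mpr ?_
      have hb : (β' g) ^ p = 1 := by
        rw [← map_pow]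
        rw [Set.mem_setOf_eq] at hg
        rw [hg, map_one]
      exact Subgroup.subset_closure hb
    exact fun x hx => hle hx
  have hsym : ∀ x ∈ Nsub, γ.symm x ∈ Nsub := by
    intro x hx
    rw [← MulAut.inv_def]
    exact hNinv γ⁻¹ x hx
  set δ := autRestrict γ Nsub (hNinv γ) hsym with hδ
  have hδdvd : orderOf δ ∣ orderOf γ := orderOf_autRestrict_dvd _ _ _ _
  obtain ⟨j, hj⟩ := hN δ
  have hδd2 : orderOf δ ∣ p ^ j := orderOf_dvd_of_pow_eq_one hj
  have hδ1 : orderOf δ = 1 :=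
    ((Nat.Coprime.coprime_dvd_left hδdvd hcop).pow_right j).eq_one_of_dvd hδd2
  have hδe : δ = 1 := orderOf_eq_one_iff.mp hδ1
  have hγfix : ∀ g : G, g ^ p = 1 → γ g = g := by
    intro g hg
    have hgN : g ∈ Nsub := Subgroup.subset_closure hg
    have hc := congrArg (fun e : MulAut ↥Nsub => ((e ⟨g, hgN⟩ : ↥Nsub) : G)) hδe
    simpa [hδ] using hc
  exact mainAux p hodd (Nat.card G) (le_refl _) hG γ hcop hγfix
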